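/- Let A be a Banach algebra, φ ∈ Δ(A), and suppose there exists a bounded net (γ_β) in A⊗̂A with a·γ_β − γ_β·a → 0 in norm and φ(π_A(γ_β)) → 1 for all a ∈ A. Then A is left φ-amenable. -/

import Mathlib

set_option synthInstance.maxHeartbeats 1000000
set_option maxHeartbeats 1000000

open ContinuousLinearMap Filter Topology MeasureTheory

/-- Data realizing the projective tensor product `B ⊗̂ B` of a Banach-algebra-like space `B`
(with multiplication `mul`) as a Banach `B`-bimodule `X`: `tp a b` is the elementary tensor
`a ⊗ b`, `lsmul a x = a · x`, `rsmul a x = x · a`, and `pi` is the product morphism `π`. -/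
structure PTD (B : Type) [NormedAddCommGroup B] [NormedSpace ℂ B]
    (X : Type) [NormedAddCommGroup X] [NormedSpace ℂ X]
    (mul : B → B → B) where
  tp : B →L[ℂ] B →L[ℂ] X
  lsmul : B →L[ℂ] X →L[ℂ] X
  rsmul : B →L[ℂ] X →L[ℂ] X
  pi : X →L[ℂ] B
  lsmul_tp : ∀ a b c, lsmul a (tp b c) = tp (mul a b) c
  rsmul_tp : ∀ a b c, rsmul a (tp b c) = tp b (mul c a)
  pi_tp : ∀ a b, pi (tp a b) = mul a b
  norm_tp : ∀ a b, ‖tp a b‖ ≤ ‖a‖ * ‖b‖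
  dense_span : Dense (↑(Submodule.span ℂ (Set.range fun p : B × B => tp p.1 p.2)) : Set X)
  lift : ∀ (Y : Type) [NormedAddCommGroup Y] [NormedSpace ℂ Y] [CompleteSpace Y]
      (b : B →L[ℂ] B →L[ℂ] Y), ∃ T : X →L[ℂ] Y, ∀ a c, T (tp a c) = b a c

/-- The double adjoint (bitranspose) `T** : E** → F**` of a continuous linear map `T : E → F`;
explicitly, `dual2 T M g = M (g ∘ T)`. -/
noncomputable def dual2 {E F : Type} [NormedAddCommGroup E] [NormedSpace ℂ E]
    [NormedAddCommGroup F] [NormedSpace ℂ F] (T : E →L[ℂ] F) :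
    ((E →L[ℂ] ℂ) →L[ℂ] ℂ) →L[ℂ] ((F →L[ℂ] ℂ) →L[ℂ] ℂ) :=
  (ContinuousLinearMap.compL ℂ (F →L[ℂ] ℂ) (E →L[ℂ] ℂ) ℂ).flip
    ((ContinuousLinearMap.compL ℂ E F ℂ).flip T)

/-- If there is a bounded net `(γ_β)` in `A ⊗̂ A` with `a · γ_β − γ_β · a → 0` in norm for
every `a ∈ A` and `φ(π(γ_β)) → 1`, then `A` is left `φ`-amenable: there is `m ∈ A**` with
`a · m = φ(a) m` for all `a ∈ A` and `φ̃(m) = 1`. -/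
theorem leftPhiAmenable_of_approx_central_net
    (A : Type) [NonUnitalNormedRing A] [NormedSpace ℂ A]
    [IsScalarTower ℂ A A] [SMulCommClass ℂ A A] [CompleteSpace A]
    (φ : A →L[ℂ] ℂ) (hφmul : ∀ a b : A, φ (a * b) = φ a * φ b) (hφne : φ ≠ 0)
    (X : Type) [NormedAddCommGroup X] [NormedSpace ℂ X] [CompleteSpace X]
    (td : PTD A X (fun a b => a * b))
    (hnet : ∃ (ι : Type) (l : Filter ι), l.NeBot ∧ ∃ (γ : ι → X) (C : ℝ),
      (∀ i, ‖γ i‖ ≤ C) ∧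
      (∀ a : A, Tendsto (fun i => td.lsmul a (γ i) - td.rsmul a (γ i)) l (𝓝 0)) ∧
      Tendsto (fun i => φ (td.pi (γ i))) l (𝓝 1)) :
    ∃ m : (A →L[ℂ] ℂ) →L[ℂ] ℂ,
      (∀ a : A, dual2 (ContinuousLinearMap.mul ℂ A a) m = φ a • m) ∧ m φ = 1 := by
  obtain ⟨ι, l, hl, γ, C, hC, hcen, hpi⟩ := hnet
  -- the map T : X → A with T (a ⊗ c) = φ(c) • a
  obtain ⟨T, hT⟩ := td.lift A (((ContinuousLinearMap.lsmul ℂ ℂ :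
      ℂ →L[ℂ] A →L[ℂ] A).comp φ).flip)
  simp only [flip_apply, comp_apply, lsmul_apply] at hT
  -- T intertwines the module actions
  have hTl : ∀ (a : A) (x : X), T (td.lsmul a x) = a * T x := by
    intro a
    suffices h : T.comp (td.lsmul a) = (ContinuousLinearMap.mul ℂ A a).comp T by
      intro x
      have := congrFun (congrArg DFunLike.coe h) x
      simpa using this
    apply ContinuousLinearMap.ext_on td.dense_span
    rintro _ ⟨⟨b, c⟩, rfl⟩
    simp only [comp_apply, mul_apply']
    rw [td.lsmul_tp, hT, hT, mul_smul_comm]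
  have hTr : ∀ (a : A) (x : X), T (td.rsmul a x) = φ a • T x := by
    intro a
    suffices h : T.comp (td.rsmul a) = φ a • T by
      intro x
      have := congrFun (congrArg DFunLike.coe h) x
      simpa using this
    apply ContinuousLinearMap.ext_on td.dense_span
    rintro _ ⟨⟨b, c⟩, rfl⟩
    simp only [comp_apply, smul_apply]
    rw [td.rsmul_tp, hT, hT, hφmul, mul_comm, mul_smul]
  have hφT : ∀ x : X, φ (T x) = φ (td.pi x) := by
    suffices h : φ.comp T = φ.comp td.pi by
      intro x; exact congrFun (congrArg DFunLike.coe h) x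
    apply ContinuousLinearMap.ext_on td.dense_span
    rintro _ ⟨⟨b, c⟩, rfl⟩
    simp only [comp_apply]
    rw [hT, td.pi_tp, hφmul]
    simp [mul_comm]
  -- the approximating net in A
  set ν : ι → A := fun i => T (γ i) with hν
  have hνb : ∀ i, ‖ν i‖ ≤ ‖T‖ * C := fun i =>
    (T.le_opNorm (γ i)).trans (mul_le_mul_of_nonneg_left (hC i) T.opNorm_nonneg)
  set M : ℝ := ‖T‖ * C with hM
  have hι : Nonempty ι := nonempty_of_neBot l
  have hM0 : 0 ≤ M := le_trans (norm_nonneg (ν (Classical.arbitrary ι))) (hνb _)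
  -- pass to an ultrafilter
  let u : Ultrafilter ι := Ultrafilter.of l
  have hul : (u : Filter ι) ≤ l := Ultrafilter.of_le l
  have hex : ∀ g : A →L[ℂ] ℂ, ∃ z : ℂ, Tendsto (fun i => g (ν i)) u (𝓝 z) := by
    intro g
    have hcpt : IsCompact (Metric.closedBall (0 : ℂ) (‖g‖ * M)) :=
      isCompact_closedBall _ _
    have hmem : ∀ i, g (ν i) ∈ Metric.closedBall (0 : ℂ) (‖g‖ * M) := by
      intro i
      simp only [Metric.mem_closedBall, dist_zero_right]
      exact (g.le_opNorm (ν i)).trans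
        (mul_le_mul_of_nonneg_left (hνb i) g.opNorm_nonneg)
    obtain ⟨z, _, hz⟩ := hcpt.ultrafilter_le_nhds (u.map fun i => g (ν i))
      (le_principal_iff.mpr (Filter.mem_map.mpr (Filter.univ_mem' hmem)))
    exact ⟨z, by rwa [Ultrafilter.coe_map] at hz⟩
  choose mf hmf using hex
  have huniq : ∀ (g : A →L[ℂ] ℂ) (z : ℂ),
      Tendsto (fun i => g (ν i)) u (𝓝 z) → mf g = z := fun g z hz =>
    tendsto_nhds_unique (hmf g) hz
  -- mf is linear and bounded
  have hadd : ∀ g h : A →L[ℂ] ℂ, mf (g + h) = mf g + mf h := by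
    intro g h
    refine huniq _ _ ?_
    simpa using (hmf g).add (hmf h)
  have hsmul : ∀ (c : ℂ) (g : A →L[ℂ] ℂ), mf (c • g) = c • mf g := by
    intro c g
    refine huniq _ _ ?_
    simpa using (hmf g).const_mul c
  have hbound : ∀ g : A →L[ℂ] ℂ, ‖mf g‖ ≤ M * ‖g‖ := by
    intro g
    refine le_of_tendsto (hmf g).norm (Filter.Eventually.of_forall fun i => ?_)
    calc ‖g (ν i)‖ ≤ ‖g‖ * ‖ν i‖ := g.le_opNorm _
      _ ≤ ‖g‖ * M := mul_le_mul_of_nonneg_left (hνb i) g.opNorm_nonneg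
      _ = M * ‖g‖ := mul_comm _ _
  let m : (A →L[ℂ] ℂ) →L[ℂ] ℂ :=
    LinearMap.mkContinuous
      { toFun := mf, map_add' := hadd, map_smul' := hsmul } M hbound
  have hmapp : ∀ g, m g = mf g := fun g => rfl
  refine ⟨m, ?_, ?_⟩
  · intro a
    ext g
    have h1 : dual2 (ContinuousLinearMap.mul ℂ A a) m g =
        mf (g.comp (ContinuousLinearMap.mul ℂ A a)) := rfl
    rw [h1]
    have h2 : (φ a • m) g = φ a * mf g := rfl
    rw [h2]
    refine huniq _ _ ?_
    have hdiff : Tendsto (fun i => g (a * ν i) - φ a * g (ν i)) u (𝓝 0) := by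
      have : ∀ i, g (a * ν i) - φ a * g (ν i) =
          g (T (td.lsmul a (γ i) - td.rsmul a (γ i))) := by
        intro i
        rw [map_sub, map_sub, hTl, hTr, _root_.map_smul]
        simp [ν, smul_eq_mul]
      simp only [this]
      have := ((hcen a).mono_left hul)
      have h0 : Tendsto (fun i => g (T (td.lsmul a (γ i) - td.rsmul a (γ i))))
          u (𝓝 (g (T 0))) := ((g.continuous.comp T.continuous).tendsto 0).comp this
      simpa using h0
    have hma : Tendsto (fun i => φ a * g (ν i)) u (𝓝 (φ a * mf g)) :=
      (hmf g).const_mul (φ a)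
    have := hdiff.add hma
    simp only [sub_add_cancel, zero_add] at this
    convert this using 2
    rfl
  · rw [hmapp]
    refine huniq _ _ ?_
    have : ∀ i, φ (ν i) = φ (td.pi (γ i)) := fun i => hφT (γ i)
    simp only [this]
    exact hpi.mono_left hul
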